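/- There exist constants K₁ > 0 and K₂ > 0 such that p(M) ≤ K₁ · exp(−K₂ (1−M)^(−κ)) for all M ∈ (0,1). -/

import Mathlib

open Real Set

/-- If `p : [0,1) → (0,∞)` is `C¹`, nonincreasing, and
`−(1−M)^{1+κ} p′(M)/p(M) → c > 0` as `M → 1⁻`, then there are constants
`K₁, K₂ > 0` with `p(M) ≤ K₁ exp(−K₂ (1−M)^{−κ})` for all `M ∈ (0,1)`. -/
theorem p_exponential_upper_bound (κ c : ℝ) (hκ : 0 < κ) (hc : 0 < c)
    (p p' : ℝ → ℝ)
    (hppos : ∀ M ∈ Ico (0:ℝ) 1, 0 < p M)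
    (hpa : AntitoneOn p (Ico 0 1))
    (hp' : ∀ M ∈ Ico (0:ℝ) 1, HasDerivWithinAt p (p' M) (Ico 0 1) M)
    (hp'c : ContinuousOn p' (Ico 0 1))
    (hlim : Filter.Tendsto (fun M => -((1 - M) ^ (1 + κ) * p' M / p M))
      (nhdsWithin 1 (Iio 1)) (nhds c)) :
    ∃ K₁ > (0:ℝ), ∃ K₂ > (0:ℝ), ∀ M ∈ Ioo (0:ℝ) 1,
      p M ≤ K₁ * Real.exp (-K₂ * (1 - M) ^ (-κ)) := by
  have h2 : ∀ᶠ M in nhdsWithin 1 (Iio 1),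
      c/2 < -((1 - M) ^ (1 + κ) * p' M / p M) :=
    hlim.eventually (eventually_gt_nhds (by linarith))
  rw [Filter.eventually_iff, mem_nhdsLT_iff_exists_Ioo_subset] at h2
  obtain ⟨l, hl, hsubl⟩ := h2
  simp only [mem_Iio] at hl
  set l' : ℝ := max l 0 with hl'def
  have hl'1 : l' < 1 := max_lt hl one_pos
  have hl'0 : (0:ℝ) ≤ l' := le_max_right _ _
  set M₀ : ℝ := (l' + 1)/2 with hM₀def
  have hM₀l : l' < M₀ := by rw [hM₀def]; linarith
  have hM₀1 : M₀ < 1 := by rw [hM₀def]; linarith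
  have hM₀0 : 0 < M₀ := by rw [hM₀def]; linarith
  set K₂ : ℝ := c/(2*κ) with hK₂def
  have hK₂ : 0 < K₂ := by positivity
  have hK₂κ : K₂ * κ = c/2 := by
    rw [hK₂def]; field_simp
  set K₁ : ℝ := p 0 * Real.exp (K₂ * (1 - M₀) ^ (-κ)) with hK₁def
  have hp0 : 0 < p 0 := hppos 0 ⟨le_refl 0, one_pos⟩
  have hK₁ : 0 < K₁ := by positivity
  refine ⟨K₁, hK₁, K₂, hK₂, ?_⟩
  have hpc : ContinuousOn p (Ico 0 1) := fun M hM =>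
    (hp' M hM).differentiableWithinAt.continuousWithinAt
  set g : ℝ → ℝ := fun M => Real.log (p M) + K₂ * (1 - M) ^ (-κ) with hgdef
  have hsubset : Ico M₀ 1 ⊆ Ico (0:ℝ) 1 := fun x hx => ⟨le_trans hM₀0.le hx.1, hx.2⟩
  -- derivative of g on the interior
  have hgderiv : ∀ x ∈ Ioo M₀ 1,
      HasDerivAt g (p' x / p x + K₂ * (κ * (1 - x) ^ (-κ - 1))) x := by
    intro x hx
    have hx0 : 0 < x := lt_trans hM₀0 hx.1
    have hx1 : x < 1 := hx.2
    have h1x : 0 < 1 - x := by linarith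
    have hmem : x ∈ Ico (0:ℝ) 1 := ⟨hx0.le, hx1⟩
    have hnhds : Ico (0:ℝ) 1 ∈ nhds x := Ico_mem_nhds hx0 hx1
    have hpd : HasDerivAt p (p' x) x := (hp' x hmem).hasDerivAt hnhds
    have hlog : HasDerivAt (fun M => Real.log (p M)) (p' x / p x) x :=
      hpd.log (hppos x hmem).ne'
    have hsub : HasDerivAt (fun M : ℝ => 1 - M) (-1) x := by
      exact (hasDerivAt_id' x).const_sub 1
    have hrpow : HasDerivAt (fun M : ℝ => (1 - M) ^ (-κ)) (κ * (1 - x) ^ (-κ - 1)) x := by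
      have h := hsub.rpow_const (p := -κ) (Or.inl h1x.ne')
      convert h using 1
      ring
    exact hlog.add (hrpow.const_mul K₂)
  have hganti : AntitoneOn g (Ico M₀ 1) := by
    apply antitoneOn_of_deriv_nonpos (convex_Ico _ _)
    · apply ContinuousOn.add
      · exact (hpc.mono hsubset).log (fun x hx => (hppos x (hsubset hx)).ne')
      · apply ContinuousOn.mul continuousOn_const
        apply ContinuousOn.rpow_const (by fun_prop)
        intro x hx
        left
        exact (by linarith [hx.2] : (0:ℝ) < 1 - x).ne'
    · rw [interior_Ico]
      intro x hx
      exact (hgderiv x hx).differentiableAt.differentiableWithinAt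
    · rw [interior_Ico]
      intro x hx
      rw [(hgderiv x hx).deriv]
      have hx0 : 0 < x := lt_trans hM₀0 hx.1
      have hx1 : x < 1 := hx.2
      have h1x : 0 < 1 - x := by linarith
      have hxl : x ∈ Ioo l 1 := ⟨lt_trans (lt_of_le_of_lt (le_max_left l 0) hM₀l) hx.1, hx1⟩
      have hbnd : c/2 < -((1 - x) ^ (1 + κ) * p' x / p x) := hsubl hxl
      set A : ℝ := (1 - x) ^ (1 + κ) with hAdef
      have hA : 0 < A := Real.rpow_pos_of_pos h1x _
      have hinv : (1 - x) ^ (-κ - 1) = A⁻¹ := by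
        rw [hAdef, ← Real.rpow_neg h1x.le]
        ring_nf
      set q : ℝ := p' x / p x with hqdef
      have hbnd' : c/2 < -(A * q) := by rw [hqdef, ← mul_div_assoc]; exact hbnd
      have hAq : A * q < -(c/2) := by linarith
      rw [hinv]
      have key : (q + K₂ * (κ * A⁻¹)) * A ≤ 0 := by
        have hAA : A * A⁻¹ = 1 := mul_inv_cancel₀ hA.ne'
        have : (q + K₂ * (κ * A⁻¹)) * A = A * q + (K₂ * κ) * (A * A⁻¹) := by ring
        rw [this, hAA, hK₂κ]
        linarith
      have key0 : (q + K₂ * (κ * A⁻¹)) * A ≤ 0 * A := by rw [zero_mul]; exact key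
      exact le_of_mul_le_mul_right key0 hA
  intro M hM
  obtain ⟨hM0, hM1⟩ := hM
  have hMmem : M ∈ Ico (0:ℝ) 1 := ⟨hM0.le, hM1⟩
  have hpM : 0 < p M := hppos M hMmem
  have hM₀mem : M₀ ∈ Ico (0:ℝ) 1 := ⟨hM₀0.le, hM₀1⟩
  have h1M : 0 < 1 - M := by linarith
  have h1M₀ : 0 < 1 - M₀ := by linarith
  rcases le_or_gt M₀ M with hcase | hcase
  · -- M₀ ≤ M : use the antitone g
    have hgle : g M ≤ g M₀ := hganti ⟨le_refl M₀, hM₀1⟩ ⟨hcase, hM1⟩ hcase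
    have hpM₀ : 0 < p M₀ := hppos M₀ hM₀mem
    have hlogle : Real.log (p M) ≤ Real.log (p M₀) +
        (K₂ * (1 - M₀) ^ (-κ) - K₂ * (1 - M) ^ (-κ)) := by
      have := hgle
      simp only [hgdef] at this
      linarith
    have h1 : p M ≤ p M₀ * Real.exp (K₂ * (1 - M₀) ^ (-κ) - K₂ * (1 - M) ^ (-κ)) := by
      have h := Real.exp_le_exp.mpr hlogle
      rwa [Real.exp_log hpM, Real.exp_add, Real.exp_log hpM₀] at h
    calc p M ≤ p M₀ * Real.exp (K₂ * (1 - M₀) ^ (-κ) - K₂ * (1 - M) ^ (-κ)) := h1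
      _ ≤ p 0 * Real.exp (K₂ * (1 - M₀) ^ (-κ) - K₂ * (1 - M) ^ (-κ)) := by
          apply mul_le_mul_of_nonneg_right
            (hpa ⟨le_refl 0, one_pos⟩ hM₀mem hM₀0.le) (Real.exp_pos _).le
      _ = K₁ * Real.exp (-K₂ * (1 - M) ^ (-κ)) := by
          rw [hK₁def, show -K₂ * (1 - M) ^ (-κ) = -(K₂ * (1 - M) ^ (-κ)) by ring,
            Real.exp_sub, Real.exp_neg]
          ring
  · -- M < M₀ : use monotonicity of p
    have hple : p M ≤ p 0 := hpa ⟨le_refl 0, one_pos⟩ hMmem hM0.le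
    have hrle : (1 - M) ^ (-κ) ≤ (1 - M₀) ^ (-κ) := by
      apply Real.rpow_le_rpow_of_nonpos h1M₀ (by linarith) (by linarith)
    have hexp1 : (1:ℝ) ≤ Real.exp (K₂ * (1 - M₀) ^ (-κ) - K₂ * (1 - M) ^ (-κ)) := by
      apply Real.one_le_exp
      have := mul_le_mul_of_nonneg_left hrle hK₂.le
      linarith
    calc p M ≤ p 0 := hple
      _ ≤ p 0 * Real.exp (K₂ * (1 - M₀) ^ (-κ) - K₂ * (1 - M) ^ (-κ)) :=
          le_mul_of_one_le_right hp0.le hexp1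
      _ = K₁ * Real.exp (-K₂ * (1 - M) ^ (-κ)) := by
          rw [hK₁def, show -K₂ * (1 - M) ^ (-κ) = -(K₂ * (1 - M) ^ (-κ)) by ring,
            Real.exp_sub, Real.exp_neg]
          ring
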